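/- arXiv:1302.6369 — 5 statements merged into one kernel-verified Lean document; each statement's English description precedes it below -/
import Mathlib

section
/- Let X be a closed linear subspace of c₀(Γ). Then for any x ∈ X and any weakly null sequence (x_n) in X, one has limsup_n ‖x_n + x‖ = max(‖x‖, limsup_n ‖x_n‖). -/
open Filter Metric Topology Pointwise NormedSpace

set_option maxHeartbeats 1000000
set_option synthInstance.maxHeartbeats 400000

noncomputable section

/-- `ca (x_k) = inf_n diam {x_k : k ≥ n}`: measures how far `(x_k)` is from being norm Cauchy. -/
def ca {Z : Type*} [NormedAddCommGroup Z] (x : ℕ → Z) : ℝ :=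
  ⨅ n : ℕ, Metric.diam (x '' Set.Ici n)

/-- `δ (x_k) = sup_{f ∈ B_{Z*}} inf_n diam {f (x_k) : k ≥ n}`: measures how far `(x_k)` is from
being weakly Cauchy. -/
def qdelta {Z : Type*} [NormedAddCommGroup Z] [NormedSpace ℝ Z] (x : ℕ → Z) : ℝ :=
  ⨆ f : Metric.closedBall (0 : StrongDual ℝ Z) 1,
    ⨅ n : ℕ, Metric.diam ((fun k => (f : StrongDual ℝ Z) (x k)) '' Set.Ici n)

/-- The space `c₀(Γ)` of functions vanishing at infinity (i.e. for every `ε > 0` the set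
`{γ | ε ≤ |f γ|}` is finite, equivalently `f → 0` along the cofinite filter), realized as a
submodule of `ℓ∞(Γ)` with the supremum norm. -/
def c0Submodule (Γ : Type*) : Subspace ℝ (lp (fun _ : Γ => ℝ) ⊤) where
  carrier := {f | Tendsto (fun γ => f γ) cofinite (𝓝 0)}
  add_mem' := by
    intro f g hf hg
    have := hf.add hg
    simpa [lp.coeFn_add] using this
  zero_mem' := by
    simpa [lp.coeFn_zero] using (tendsto_const_nhds : Tendsto (fun _ : Γ => (0:ℝ)) cofinite (𝓝 0))
  smul_mem' := by
    intro c f hf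
    have : Tendsto (fun γ => c * f γ) cofinite (𝓝 (c * 0)) := hf.const_mul c
    simpa [lp.coeFn_smul, smul_eq_mul] using this

/-- Coordinate evaluation functional on a subspace of `ℓ∞(Γ)`. -/
def coordFn {Γ : Type*} (X : Subspace ℝ (lp (fun _ : Γ => ℝ) ⊤)) (γ : Γ) :
    StrongDual ℝ X :=
  LinearMap.mkContinuous
    { toFun := fun v => (v : lp (fun _ : Γ => ℝ) ⊤) γ
      map_add' := by intro v w; simp [lp.coeFn_add]
      map_smul' := by intro c v; simp [lp.coeFn_smul]
    }
    1 (fun v => by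
      show ‖(v : lp (fun _ : Γ => ℝ) ⊤) γ‖ ≤ 1 * ‖v‖
      simpa using lp.norm_apply_le_norm (E := fun _ : Γ => ℝ) ENNReal.top_ne_zero
        (v : lp (fun _ : Γ => ℝ) ⊤) γ)

theorem coordFn_apply {Γ : Type*} (X : Subspace ℝ (lp (fun _ : Γ => ℝ) ⊤)) (γ : Γ) (v : X) :
    coordFn X γ v = (v : lp (fun _ : Γ => ℝ) ⊤) γ := rfl

/-- For a closed subspace `X` of `c₀(Γ)`, any `x ∈ X` and any weakly null sequence `(x_n)` in `X`,
one has `limsup ‖x_n + x‖ = max (‖x‖, limsup ‖x_n‖)`. -/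
theorem limsup_norm_add_of_weakly_null {Γ : Type*}
    (X : Subspace ℝ (lp (fun _ : Γ => ℝ) ⊤))
    (hX0 : X ≤ c0Submodule Γ)
    (hXc : IsClosed (X : Set (lp (fun _ : Γ => ℝ) ⊤)))
    (x : X) (u : ℕ → X)
    (hw : ∀ f : StrongDual ℝ X, Tendsto (fun n => f (u n)) atTop (𝓝 0)) :
    Filter.limsup (fun n => ‖u n + x‖) atTop
      = max ‖x‖ (Filter.limsup (fun n => ‖u n‖) atTop) := by
  classical
  haveI : Fact ((1:ENNReal) ≤ ⊤) := ⟨le_top⟩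
  haveI : CompleteSpace X := hXc.completeSpace_coe
  -- coordinatewise convergence of u
  have hcoord : ∀ γ : Γ, Tendsto (fun n => ((u n : lp (fun _ : Γ => ℝ) ⊤) γ)) atTop (𝓝 0) :=
    fun γ => hw (coordFn X γ)
  -- x vanishes at infinity
  have hx0 : Tendsto (fun γ => (x : lp (fun _ : Γ => ℝ) ⊤) γ) cofinite (𝓝 0) := hX0 x.2
  -- boundedness of u via Banach-Steinhaus
  obtain ⟨C, hC⟩ : ∃ C, ∀ n, ‖u n‖ ≤ C := by
    obtain ⟨C', hC'⟩ := banach_steinhaus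
      (σ₁₂ := RingHom.id ℝ) (E := StrongDual ℝ X) (F := ℝ)
      (g := fun n => NormedSpace.inclusionInDoubleDualLi ℝ (E := X) (u n))
      (fun f => by
        obtain ⟨b, hb⟩ := ((hw f).norm.bddAbove_range)
        exact ⟨b, fun n => hb ⟨n, rfl⟩⟩)
    exact ⟨C', fun n => by
      have h := hC' n; rwa [LinearIsometry.norm_map] at h⟩
  -- notation
  set a : ℕ → ℝ := fun n => ‖u n + x‖ with ha
  set b : ℕ → ℝ := fun n => ‖u n‖ with hb
  have habd : IsBoundedUnder (· ≤ ·) atTop a :=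
    Filter.isBoundedUnder_of ⟨C + ‖x‖, fun n =>
      (norm_add_le (u n) x).trans (by have := hC n; linarith)⟩
  have hbbd : IsBoundedUnder (· ≤ ·) atTop b := Filter.isBoundedUnder_of ⟨C, hC⟩
  have hacob : IsCoboundedUnder (· ≤ ·) atTop a :=
    Filter.isCoboundedUnder_le_of_le atTop (x := 0) fun n => norm_nonneg _
  have hbcob : IsCoboundedUnder (· ≤ ·) atTop b :=
    Filter.isCoboundedUnder_le_of_le atTop (x := 0) fun n => norm_nonneg _
  set M : ℝ := Filter.limsup a atTop with hM
  set L : ℝ := Filter.limsup b atTop with hL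
  have hM0 : 0 ≤ M :=
    Filter.le_limsup_of_frequently_le
      (Filter.Frequently.of_forall fun n => norm_nonneg _) habd
  -- norms via coordinates
  have hnorm : ∀ v : X, ‖v‖ = ‖(v : lp (fun _ : Γ => ℝ) ⊤)‖ := fun v => rfl
  have happt : ∀ (v : X) (γ : Γ), ‖(v : lp (fun _ : Γ => ℝ) ⊤) γ‖ ≤ ‖v‖ := fun v γ =>
    lp.norm_apply_le_norm ENNReal.top_ne_zero (v : lp (fun _ : Γ => ℝ) ⊤) γ
  have hnle : ∀ (v : X) (K : ℝ), 0 ≤ K →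
      (∀ γ, ‖(v : lp (fun _ : Γ => ℝ) ⊤) γ‖ ≤ K) → ‖v‖ ≤ K := fun v K hK h =>
    lp.norm_le_of_forall_le hK h
  have hadd : ∀ (n : ℕ) (γ : Γ), ((u n + x : X) : lp (fun _ : Γ => ℝ) ⊤) γ
      = (u n : lp (fun _ : Γ => ℝ) ⊤) γ + (x : lp (fun _ : Γ => ℝ) ⊤) γ := by
    intro n γ; simp [lp.coeFn_add]
  -- finite sets where x is not small
  have hxfin : ∀ ε : ℝ, 0 < ε → ∃ F : Finset Γ,
      ∀ γ ∉ F, ‖(x : lp (fun _ : Γ => ℝ) ⊤) γ‖ ≤ ε := by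
    intro ε hε
    have h1 : ∀ᶠ γ in cofinite, ‖(x : lp (fun _ : Γ => ℝ) ⊤) γ‖ < ε := by
      simpa using NormedAddCommGroup.tendsto_nhds_zero.mp hx0 ε hε
    rw [Filter.eventually_cofinite] at h1
    refine ⟨h1.toFinset, fun γ hγ => le_of_not_gt fun h => ?_⟩
    · exact hγ (h1.mem_toFinset.mpr (not_lt.mpr (le_of_lt h)))
  -- u uniformly small on finite sets, eventually
  have husmall : ∀ (F : Finset Γ) (ε : ℝ), 0 < ε →
      ∀ᶠ n in atTop, ∀ γ ∈ F, ‖(u n : lp (fun _ : Γ => ℝ) ⊤) γ‖ ≤ ε := by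
    intro F ε hε
    have : ∀ γ ∈ F, ∀ᶠ n in atTop, ‖(u n : lp (fun _ : Γ => ℝ) ⊤) γ‖ ≤ ε := by
      intro γ _
      have := NormedAddCommGroup.tendsto_nhds_zero.mp (hcoord γ) ε hε
      exact this.mono fun n h => le_of_lt h
    exact (Filter.eventually_all_finset F).mpr this
  -- Step 1 : M ≤ max ‖x‖ L
  have step1 : M ≤ max ‖x‖ L := by
    refine le_of_forall_pos_le_add fun ε hε => ?_
    have hε2 : 0 < ε / 2 := by linarith
    obtain ⟨F, hF⟩ := hxfin (ε / 2) hε2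
    have hbev : ∀ᶠ n in atTop, b n < L + ε / 2 :=
      Filter.eventually_lt_of_limsup_lt (by linarith [hL]; ) hbbd
    have hev : ∀ᶠ n in atTop, a n ≤ max ‖x‖ L + ε := by
      filter_upwards [husmall F (ε / 2) hε2, hbev] with n hn hbn
      have key : a n ≤ max (‖x‖ + ε / 2) (b n + ε / 2) := by
        refine hnle _ _ (le_max_of_le_left (by positivity)) fun γ => ?_
        rw [hadd n γ]
        by_cases hγ : γ ∈ F
        · refine le_max_of_le_left ?_
          calc ‖(u n : lp (fun _ : Γ => ℝ) ⊤) γ + (x : lp (fun _ : Γ => ℝ) ⊤) γ‖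
              ≤ ‖(u n : lp (fun _ : Γ => ℝ) ⊤) γ‖ + ‖(x : lp (fun _ : Γ => ℝ) ⊤) γ‖ :=
                norm_add_le _ _
            _ ≤ ε / 2 + ‖x‖ := add_le_add (hn γ hγ) (happt x γ)
            _ = ‖x‖ + ε / 2 := by ring
        · refine le_max_of_le_right ?_
          calc ‖(u n : lp (fun _ : Γ => ℝ) ⊤) γ + (x : lp (fun _ : Γ => ℝ) ⊤) γ‖
              ≤ ‖(u n : lp (fun _ : Γ => ℝ) ⊤) γ‖ + ‖(x : lp (fun _ : Γ => ℝ) ⊤) γ‖ :=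
                norm_add_le _ _
            _ ≤ b n + ε / 2 := add_le_add (happt (u n) γ) (hF γ hγ)
      have : max (‖x‖ + ε / 2) (b n + ε / 2) ≤ max ‖x‖ L + ε := by
        refine max_le ?_ ?_
        · have : ‖x‖ ≤ max ‖x‖ L := le_max_left _ _
          linarith
        · have : L ≤ max ‖x‖ L := le_max_right _ _
          linarith
      linarith
    exact Filter.limsup_le_of_le hacob hev
  -- Step 2 : ‖x‖ ≤ M
  have step2 : ‖x‖ ≤ M := by
    have key : ∀ ε : ℝ, 0 < ε → ‖x‖ ≤ M + 2 * ε := by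
      intro ε hε
      by_cases hxε : ‖x‖ ≤ ε
      · linarith
      push_neg at hxε
      -- find a coordinate nearly attaining ‖x‖
      have hne : Nonempty Γ := by
        by_contra h
        rw [not_nonempty_iff] at h
        have : ‖x‖ = 0 := by
          rw [hnorm x, lp.norm_eq_ciSup]
          exact Real.iSup_of_isEmpty _
        linarith
      have hlt : ‖x‖ - ε < ⨆ γ, ‖(x : lp (fun _ : Γ => ℝ) ⊤) γ‖ := by
        rw [← lp.norm_eq_ciSup, ← hnorm x]; linarith
      obtain ⟨γ₀, hγ₀⟩ := exists_lt_of_lt_ciSup hlt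
      have hev : ∀ᶠ n in atTop, ‖x‖ - 2 * ε ≤ a n := by
        have := NormedAddCommGroup.tendsto_nhds_zero.mp (hcoord γ₀) ε hε
        filter_upwards [this] with n hn
        have h1 : ‖((u n + x : X) : lp (fun _ : Γ => ℝ) ⊤) γ₀‖ ≤ a n := happt _ _
        rw [hadd n γ₀] at h1
        have h2 : ‖(x : lp (fun _ : Γ => ℝ) ⊤) γ₀‖
            ≤ ‖(u n : lp (fun _ : Γ => ℝ) ⊤) γ₀ + (x : lp (fun _ : Γ => ℝ) ⊤) γ₀‖
              + ‖(u n : lp (fun _ : Γ => ℝ) ⊤) γ₀‖ := by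
          calc ‖(x : lp (fun _ : Γ => ℝ) ⊤) γ₀‖
              = ‖((u n : lp (fun _ : Γ => ℝ) ⊤) γ₀ + (x : lp (fun _ : Γ => ℝ) ⊤) γ₀)
                - (u n : lp (fun _ : Γ => ℝ) ⊤) γ₀‖ := by congr 1; ring
            _ ≤ _ := norm_sub_le _ _
        linarith
      have := Filter.le_limsup_of_frequently_le hev.frequently habd
      linarith
    refine le_of_forall_pos_le_add fun ε hε => ?_
    have := key (ε / 2) (by linarith)
    linarith
  -- Step 3 : L ≤ M
  have step3 : L ≤ M := by
    have key : ∀ ε : ℝ, 0 < ε → L ≤ M + 2 * ε := by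
      intro ε hε
      obtain ⟨F, hF⟩ := hxfin ε hε
      have haev : ∀ᶠ n in atTop, a n < M + ε :=
        Filter.eventually_lt_of_limsup_lt (by linarith) habd
      have hev : ∀ᶠ n in atTop, b n ≤ M + 2 * ε := by
        filter_upwards [husmall F ε hε, haev] with n hn han
        have : b n ≤ a n + ε := by
          refine hnle (u n) _ (by positivity) fun γ => ?_
          by_cases hγ : γ ∈ F
          · have := hn γ hγ
            have h0 : (0:ℝ) ≤ a n := norm_nonneg _
            linarith
          · have h1 : ‖((u n + x : X) : lp (fun _ : Γ => ℝ) ⊤) γ‖ ≤ a n := happt _ _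
            rw [hadd n γ] at h1
            have h2 : ‖(u n : lp (fun _ : Γ => ℝ) ⊤) γ‖
                ≤ ‖(u n : lp (fun _ : Γ => ℝ) ⊤) γ + (x : lp (fun _ : Γ => ℝ) ⊤) γ‖
                  + ‖(x : lp (fun _ : Γ => ℝ) ⊤) γ‖ := by
              have heq : (u n : lp (fun _ : Γ => ℝ) ⊤) γ
                  = ((u n : lp (fun _ : Γ => ℝ) ⊤) γ + (x : lp (fun _ : Γ => ℝ) ⊤) γ)
                    - (x : lp (fun _ : Γ => ℝ) ⊤) γ := by ring
              calc ‖(u n : lp (fun _ : Γ => ℝ) ⊤) γ‖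
                  = ‖((u n : lp (fun _ : Γ => ℝ) ⊤) γ + (x : lp (fun _ : Γ => ℝ) ⊤) γ)
                    - (x : lp (fun _ : Γ => ℝ) ⊤) γ‖ := by rw [← heq]
                _ ≤ _ := norm_sub_le _ _
            have h3 := hF γ hγ
            linarith
        linarith
      exact Filter.limsup_le_of_le hbcob hev
    refine le_of_forall_pos_le_add fun ε hε => ?_
    have := key (ε / 2) (by linarith)
    linarith
  exact le_antisymm step1 (max_le step2 step3)
end
end

section
/- Let (x_k) be a bounded sequence in a Banach space X. Then δ((x_k)) equals the diameter (in the norm of X**) of the set of all weak* cluster points of (x_k) in the bidual X**, where X is canonically embedded in X**. -/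
open Filter Metric Topology Pointwise NormedSpace

set_option maxHeartbeats 1000000
set_option synthInstance.maxHeartbeats 400000

noncomputable section

/-- A cluster point of a sequence lies in the closure of every tail. -/
lemma mapClusterPt_mem_closure_tail {Z : Type*} [TopologicalSpace Z] {u : ℕ → Z} {a : Z}
    (h : MapClusterPt a atTop u) (n : ℕ) : a ∈ closure (u '' Set.Ici n) := by
  rw [mem_closure_iff_nhds]
  intro t ht
  obtain ⟨k, hkt, hk⟩ := ((mapClusterPt_iff_frequently.1 h t ht).and_eventually (eventually_ge_atTop n)).exists
  exact ⟨u k, hkt, ⟨k, hk, rfl⟩⟩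

/-- The limsup of a bounded real sequence is a cluster point. -/
lemma mapClusterPt_limsup {u : ℕ → ℝ} (hbl : IsBoundedUnder (· ≤ ·) atTop u)
    (hbg : IsBoundedUnder (· ≥ ·) atTop u) :
    MapClusterPt (limsup u atTop) atTop u := by
  set a := limsup u atTop
  rw [mapClusterPt_iff_frequently]
  intro s hs
  obtain ⟨ε, hε, hball⟩ := Metric.mem_nhds_iff.1 hs
  have h1 : ∃ᶠ k in atTop, a - ε < u k :=
    frequently_lt_of_lt_limsup hbg.isCoboundedUnder_le (by linarith)
  have h2 : ∀ᶠ k in atTop, u k < a + ε :=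
    eventually_lt_of_limsup_lt (by linarith) hbl
  refine (h1.and_eventually h2).mono fun k ⟨hk1, hk2⟩ => hball ?_
  rw [Metric.mem_ball, Real.dist_eq, abs_lt]
  constructor <;> linarith

/-- The liminf of a bounded real sequence is a cluster point. -/
lemma mapClusterPt_liminf {u : ℕ → ℝ} (hbl : IsBoundedUnder (· ≤ ·) atTop u)
    (hbg : IsBoundedUnder (· ≥ ·) atTop u) :
    MapClusterPt (liminf u atTop) atTop u := by
  set a := liminf u atTop
  rw [mapClusterPt_iff_frequently]
  intro s hs
  obtain ⟨ε, hε, hball⟩ := Metric.mem_nhds_iff.1 hs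
  have h1 : ∃ᶠ k in atTop, u k < a + ε :=
    frequently_lt_of_liminf_lt hbl.isCoboundedUnder_ge (by linarith)
  have h2 : ∀ᶠ k in atTop, a - ε < u k :=
    eventually_lt_of_lt_liminf (by linarith) hbg
  refine (h1.and_eventually h2).mono fun k ⟨hk1, hk2⟩ => hball ?_
  rw [Metric.mem_ball, Real.dist_eq, abs_lt]
  constructor <;> linarith

/-- Any cluster point of `(f (x_k))` is attained by a weak* cluster point of `(x_k)` in the
bidual (Banach–Alaoglu). -/
lemma exists_weakStar_clusterPt {X : Type*} [NormedAddCommGroup X] [NormedSpace ℝ X]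
    (x : ℕ → X) {M : ℝ} (hM : ∀ k, ‖x k‖ ≤ M) (f : StrongDual ℝ X) {a : ℝ}
    (ha : MapClusterPt a atTop (fun k => f (x k))) :
    ∃ F : StrongDual ℝ (StrongDual ℝ X),
      MapClusterPt (X := WeakDual ℝ (StrongDual ℝ X)) F atTop
        (fun k => NormedSpace.inclusionInDoubleDual ℝ X (x k)) ∧ F f = a := by
  obtain ⟨U, hU, hUa⟩ := mapClusterPt_iff_ultrafilter.1 ha
  set J : ℕ → WeakDual ℝ (StrongDual ℝ X) :=
    fun k => NormedSpace.inclusionInDoubleDual ℝ X (x k) with hJ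
  have hK : IsCompact (WeakDual.toStrongDual ⁻¹'
      Metric.closedBall (0 : StrongDual ℝ (StrongDual ℝ X)) M) :=
    WeakDual.isCompact_closedBall (𝕜 := ℝ) 0 M
  have hmem : ∀ k, J k ∈ WeakDual.toStrongDual ⁻¹'
      Metric.closedBall (0 : StrongDual ℝ (StrongDual ℝ X)) M := by
    intro k
    simp only [Set.mem_preimage, Metric.mem_closedBall, dist_zero_right]
    rw [@dist_zero_right (StrongDual ℝ (StrongDual ℝ X)) _]
    exact le_trans (NormedSpace.double_dual_bound ℝ X (x k)) (hM k)
  have hle : ↑(U.map J) ≤ 𝓟 (WeakDual.toStrongDual ⁻¹'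
      Metric.closedBall (0 : StrongDual ℝ (StrongDual ℝ X)) M) := by
    rw [le_principal_iff, Ultrafilter.coe_map, mem_map]
    exact univ_mem' hmem
  obtain ⟨F, _, hFl⟩ := hK.ultrafilter_le_nhds (U.map J) hle
  have hFl' : Tendsto J U (𝓝 F) := by rwa [Ultrafilter.coe_map] at hFl
  refine ⟨WeakDual.toStrongDual F, ?_, ?_⟩
  · exact mapClusterPt_iff_ultrafilter.2 ⟨U, hU, hFl'⟩
  · have h1 : Tendsto (fun k => f (x k)) U (𝓝 (F f)) :=
      ((WeakDual.eval_continuous f).tendsto F).comp hFl'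
    exact tendsto_nhds_unique h1 hUa

/-- For a bounded sequence `(x_k)` in a Banach space `X`, the quantity `δ (x_k)` equals the
norm-diameter of the set of all weak* cluster points of `(x_k)` in the bidual `X**`. -/
theorem qdelta_eq_diam_weakStar_cluster_points {X : Type*}
    [NormedAddCommGroup X] [NormedSpace ℝ X] [CompleteSpace X]
    (x : ℕ → X) (hx : ∃ M : ℝ, ∀ k, ‖x k‖ ≤ M) :
    qdelta x = Metric.diam {F : StrongDual ℝ (StrongDual ℝ X) |
      MapClusterPt (X := WeakDual ℝ (StrongDual ℝ X)) F atTop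
        (fun k => NormedSpace.inclusionInDoubleDual ℝ X (x k))} := by
  obtain ⟨M, hM⟩ := hx
  have hM0 : (0 : ℝ) ≤ M := le_trans (norm_nonneg _) (hM 0)
  set C := {F : StrongDual ℝ (StrongDual ℝ X) |
      MapClusterPt (X := WeakDual ℝ (StrongDual ℝ X)) F atTop
        (fun k => NormedSpace.inclusionInDoubleDual ℝ X (x k))} with hC
  -- evaluation at a functional of a weak* cluster point is a cluster point of the values
  have hCeval : ∀ F ∈ C, ∀ f : StrongDual ℝ X,
      MapClusterPt (F f) atTop (fun k => f (x k)) := by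
    intro F hF f
    have hcont : ContinuousAt (fun G : WeakDual ℝ (StrongDual ℝ X) => G f) F :=
      (WeakDual.eval_continuous f).continuousAt
    exact MapClusterPt.continuousAt_comp hcont hF
  -- tails of the value sequences are bounded
  have htail : ∀ (f : StrongDual ℝ X) (n : ℕ),
      (fun k => f (x k)) '' Set.Ici n ⊆ Set.Icc (-(‖f‖ * M)) (‖f‖ * M) := by
    rintro f n y ⟨k, -, rfl⟩
    have h1 : |f (x k)| ≤ ‖f‖ * M := by
      calc |f (x k)| = ‖f (x k)‖ := rfl
        _ ≤ ‖f‖ * ‖x k‖ := f.le_opNorm _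
        _ ≤ ‖f‖ * M := by gcongr; exact hM k
    exact abs_le.1 h1
  have htailb : ∀ (f : StrongDual ℝ X) (n : ℕ),
      Bornology.IsBounded ((fun k => f (x k)) '' Set.Ici n) :=
    fun f n => (isBounded_Icc _ _).subset (htail f n)
  -- cluster points are bounded by M in norm
  have hCsub : C ⊆ Metric.closedBall 0 M := by
    intro F hF
    rw [Metric.mem_closedBall, @dist_zero_right (StrongDual ℝ (StrongDual ℝ X)) _ F]
    refine F.opNorm_le_bound hM0 fun g => ?_
    have h1 : F g ∈ closure ((fun k => g (x k)) '' Set.Ici 0) :=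
      mapClusterPt_mem_closure_tail (hCeval F hF g) 0
    have h2 : F g ∈ Set.Icc (-(‖g‖ * M)) (‖g‖ * M) :=
      closure_minimal (htail g 0) isClosed_Icc h1
    have := abs_le.2 h2
    calc ‖F g‖ = |F g| := rfl
      _ ≤ ‖g‖ * M := this
      _ = M * ‖g‖ := mul_comm _ _
  have hCbdd : Bornology.IsBounded C := Metric.isBounded_closedBall.subset hCsub
  -- each inner infimum is bounded below by 0 and the sup is over a bounded family
  have hinf_nonneg : ∀ f : StrongDual ℝ X,
      0 ≤ ⨅ n : ℕ, Metric.diam ((fun k => f (x k)) '' Set.Ici n) :=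
    fun f => le_ciInf fun n => Metric.diam_nonneg
  have hbddbelow : ∀ f : StrongDual ℝ X,
      BddBelow (Set.range fun n : ℕ => Metric.diam ((fun k => f (x k)) '' Set.Ici n)) :=
    fun f => ⟨0, by rintro y ⟨n, rfl⟩; exact Metric.diam_nonneg⟩
  have hinf_le : ∀ f : StrongDual ℝ X, ‖f‖ ≤ 1 →
      (⨅ n : ℕ, Metric.diam ((fun k => f (x k)) '' Set.Ici n)) ≤ 2 * M := by
    intro f hf
    refine le_trans (ciInf_le (hbddbelow f) 0) ?_
    calc Metric.diam ((fun k => f (x k)) '' Set.Ici 0)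
        ≤ Metric.diam (Set.Icc (-(‖f‖ * M)) (‖f‖ * M)) :=
          Metric.diam_mono (htail f 0) (isBounded_Icc _ _)
      _ = ‖f‖ * M - -(‖f‖ * M) := Real.diam_Icc (neg_le_self (by positivity))
      _ = 2 * (‖f‖ * M) := by ring
      _ ≤ 2 * (1 * M) := by gcongr
      _ = 2 * M := by ring
  have hBddAbove : BddAbove (Set.range fun f : Metric.closedBall (0 : StrongDual ℝ X) 1 =>
      ⨅ n : ℕ, Metric.diam ((fun k => (f : StrongDual ℝ X) (x k)) '' Set.Ici n)) := by
    refine ⟨2 * M, ?_⟩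
    rintro y ⟨⟨f, hf⟩, rfl⟩
    exact hinf_le f (by rwa [Metric.mem_closedBall, dist_zero_right] at hf)
  have hne : Nonempty (Metric.closedBall (0 : StrongDual ℝ X) 1) :=
    ⟨⟨0, Metric.mem_closedBall_self zero_le_one⟩⟩
  apply le_antisymm
  · -- qdelta ≤ diam C
    refine ciSup_le fun ⟨f, hf⟩ => ?_
    have hf1 : ‖f‖ ≤ 1 := by rwa [Metric.mem_closedBall, dist_zero_right] at hf
    set u : ℕ → ℝ := fun k => f (x k) with hu
    have hub : ∀ k, |u k| ≤ ‖f‖ * M := by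
      intro k
      calc |u k| = ‖f (x k)‖ := rfl
        _ ≤ ‖f‖ * ‖x k‖ := f.le_opNorm _
        _ ≤ ‖f‖ * M := by gcongr; exact hM k
    have hbl : IsBoundedUnder (· ≤ ·) atTop u :=
      isBoundedUnder_of ⟨‖f‖ * M, fun k => (abs_le.1 (hub k)).2⟩
    have hbg : IsBoundedUnder (· ≥ ·) atTop u :=
      isBoundedUnder_of ⟨-(‖f‖ * M), fun k => (abs_le.1 (hub k)).1⟩
    set a := limsup u atTop with ha
    set b := liminf u atTop with hb
    have hba : b ≤ a := liminf_le_limsup hbl hbg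
    obtain ⟨F, hFC, hFa⟩ := exists_weakStar_clusterPt x hM f (mapClusterPt_limsup hbl hbg)
    obtain ⟨G, hGC, hGb⟩ := exists_weakStar_clusterPt x hM f (mapClusterPt_liminf hbl hbg)
    have hdistC : dist F G ≤ Metric.diam C := Metric.dist_le_diam_of_mem hCbdd hFC hGC
    have hab : a - b ≤ Metric.diam C := by
      have h1 : |F f - G f| ≤ ‖F - G‖ * ‖f‖ := by
        calc |F f - G f| = ‖(F - G) f‖ := by simp
          _ ≤ ‖F - G‖ * ‖f‖ := (F - G).le_opNorm f
      have h2 : a - b ≤ |F f - G f| := by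
        rw [hFa, hGb] at *
        exact le_abs_self _
      calc a - b ≤ |F f - G f| := h2
        _ ≤ ‖F - G‖ * ‖f‖ := h1
        _ ≤ ‖F - G‖ * 1 := by gcongr
        _ = dist F G := by rw [mul_one]; exact (dist_eq_norm F G).symm
        _ ≤ Metric.diam C := hdistC
    -- the infimum of the tail diameters is at most a - b
    have hinf : (⨅ n : ℕ, Metric.diam (u '' Set.Ici n)) ≤ a - b := by
      refine le_of_forall_pos_le_add fun ε hε => ?_
      have h1 : ∀ᶠ k in atTop, u k < a + ε / 2 :=
        eventually_lt_of_limsup_lt (by rw [← ha]; linarith) hbl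
      have h2 : ∀ᶠ k in atTop, b - ε / 2 < u k :=
        eventually_lt_of_lt_liminf (by rw [← hb]; linarith) hbg
      obtain ⟨N, hN⟩ := eventually_atTop.1 (h1.and h2)
      have hsub : u '' Set.Ici N ⊆ Set.Icc (b - ε / 2) (a + ε / 2) := by
        rintro y ⟨k, hk, rfl⟩
        exact ⟨(hN k hk).2.le, (hN k hk).1.le⟩
      calc (⨅ n : ℕ, Metric.diam (u '' Set.Ici n)) ≤ Metric.diam (u '' Set.Ici N) :=
            ciInf_le (hbddbelow f) N
        _ ≤ Metric.diam (Set.Icc (b - ε / 2) (a + ε / 2)) :=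
            Metric.diam_mono hsub (isBounded_Icc _ _)
        _ = (a + ε / 2) - (b - ε / 2) := Real.diam_Icc (by linarith)
        _ = a - b + ε := by ring
    exact le_trans hinf hab
  · -- diam C ≤ qdelta
    have hq0 : 0 ≤ qdelta x := by
      have h := le_ciSup hBddAbove (⟨0, Metric.mem_closedBall_self zero_le_one⟩ :
          Metric.closedBall (0 : StrongDual ℝ X) 1)
      refine le_trans ?_ h
      have himg : ∀ n : ℕ, ((fun k => (0 : StrongDual ℝ X) (x k)) '' Set.Ici n)
          = {(0 : ℝ)} := by
        intro n
        rw [show (fun k => (0 : StrongDual ℝ X) (x k)) = fun _ : ℕ => (0 : ℝ) from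
          funext fun k => by simp]
        exact (Set.nonempty_Ici).image_const _
      simp only [himg, Metric.diam_singleton, ciInf_const, le_refl]
    refine Metric.diam_le_of_forall_dist_le hq0 fun F hF G hG => ?_
    rw [@dist_eq_norm (StrongDual ℝ (StrongDual ℝ X)) _ F G]
    refine ContinuousLinearMap.opNorm_le_bound _ hq0 fun f => ?_
    rcases eq_or_ne f 0 with rfl | hf0
    · simp
    · set g : StrongDual ℝ X := ‖f‖⁻¹ • f with hg
      have hfn : (0 : ℝ) < ‖f‖ := norm_pos_iff.2 hf0
      have hgn : ‖g‖ = 1 := by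
        rw [hg, norm_smul, norm_inv, norm_norm, inv_mul_cancel₀ hfn.ne']
      have hgmem : g ∈ Metric.closedBall (0 : StrongDual ℝ X) 1 := by
        rw [Metric.mem_closedBall, dist_zero_right, hgn]
      -- dist (F g) (G g) ≤ inf_n diam tail
      have hkey : dist (F g) (G g) ≤
          ⨅ n : ℕ, Metric.diam ((fun k => g (x k)) '' Set.Ici n) := by
        refine le_ciInf fun n => ?_
        have hFc : F g ∈ closure ((fun k => g (x k)) '' Set.Ici n) :=
          mapClusterPt_mem_closure_tail (hCeval F hF g) n
        have hGc : G g ∈ closure ((fun k => g (x k)) '' Set.Ici n) :=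
          mapClusterPt_mem_closure_tail (hCeval G hG g) n
        calc dist (F g) (G g)
            ≤ Metric.diam (closure ((fun k => g (x k)) '' Set.Ici n)) :=
              Metric.dist_le_diam_of_mem (htailb g n).closure hFc hGc
          _ = Metric.diam ((fun k => g (x k)) '' Set.Ici n) := Metric.diam_closure _
      have hle : dist (F g) (G g) ≤ qdelta x :=
        le_trans hkey (le_ciSup hBddAbove (⟨g, hgmem⟩ :
          Metric.closedBall (0 : StrongDual ℝ X) 1))
      -- relate (F - G) f to F g - G g
      have hrel : ‖(F - G) f‖ = ‖f‖ * dist (F g) (G g) := by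
        have h1 : F g = ‖f‖⁻¹ * F f := by rw [hg, map_smul]; rfl
        have h2 : G g = ‖f‖⁻¹ * G f := by rw [hg, map_smul]; rfl
        rw [Real.dist_eq, h1, h2, ← mul_sub, abs_mul, abs_inv, abs_norm]
        simp only [ContinuousLinearMap.sub_apply]
        rw [Real.norm_eq_abs, ← mul_assoc, mul_inv_cancel₀ hfn.ne', one_mul]
      rw [hrel, mul_comm]
      gcongr
end
end

section
/- Let X be a Banach space with the C-Schur property, where C > 0. Then for every bounded sequence (x_n) in X one has ca_ρ((x_n)) ≤ C·δ((x_n)). -/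
open Filter Metric Topology Pointwise NormedSpace

set_option maxHeartbeats 1000000
set_option synthInstance.maxHeartbeats 400000

noncomputable section

/-- `ca_ρ (x_n)`: measures how far `(x_n)` is from being Cauchy in the restriction to `X` of the
Mackey topology of `X**`; the outer supremum runs over all subsets `K` of the closed unit ball of
`X*` which are compact in the weak topology `σ(X*, X**)`. -/
def caRho {Z : Type*} [NormedAddCommGroup Z] [NormedSpace ℝ Z] (x : ℕ → Z) : ℝ :=
  sSup { r : ℝ | ∃ K : Set (StrongDual ℝ Z),
    K ⊆ Metric.closedBall 0 1 ∧
    IsCompact (show Set (WeakSpace ℝ (StrongDual ℝ Z)) from K) ∧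
    r = ⨅ n : ℕ, ⨆ j : Set.Ici n, ⨆ l : Set.Ici n, ⨆ f : K,
      |(f : StrongDual ℝ Z) (x j - x l)| }

/-- **Theorem 2.1(i).** If a Banach space `X` has the `C`-Schur property (`C > 0`), then
`ca_ρ (x_n) ≤ C · δ (x_n)` for every bounded sequence `(x_n)` in `X`. -/
theorem caRho_le_of_CSchur {X : Type*} [NormedAddCommGroup X] [NormedSpace ℝ X] [CompleteSpace X]
    (C : ℝ) (hC : 0 < C)
    (hSchur : ∀ z : ℕ → X, (∃ M : ℝ, ∀ k, ‖z k‖ ≤ M) → ca z ≤ C * qdelta z)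
    (x : ℕ → X) (hx : ∃ M : ℝ, ∀ k, ‖x k‖ ≤ M) :
    caRho x ≤ C * qdelta x := by
  obtain ⟨M, hM⟩ := hx
  have hbdd : ∀ n : ℕ, Bornology.IsBounded (x '' Set.Ici n) := fun n =>
    (Metric.isBounded_closedBall (x := (0 : X)) (r := M)).subset (by
      rintro _ ⟨k, -, rfl⟩
      simpa [Metric.mem_closedBall, dist_zero_right] using hM k)
  have hqd : 0 ≤ qdelta x := by
    apply Real.iSup_nonneg
    intro f
    exact Real.iInf_nonneg fun n => Metric.diam_nonneg
  have hca : ca x ≤ C * qdelta x := hSchur x ⟨M, hM⟩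
  apply Real.sSup_le
  · rintro r ⟨K, hK, hKc, rfl⟩
    refine le_trans ?_ hca
    apply le_ciInf
    intro n
    have hS : ∀ m : ℕ, (0 : ℝ) ≤ ⨆ j : Set.Ici m, ⨆ l : Set.Ici m, ⨆ f : K,
        |(f : StrongDual ℝ X) (x j - x l)| := by
      intro m
      apply Real.iSup_nonneg; intro j
      apply Real.iSup_nonneg; intro l
      apply Real.iSup_nonneg; intro f
      exact abs_nonneg _
    refine le_trans (ciInf_le ⟨0, ?_⟩ n) ?_
    · rintro _ ⟨m, rfl⟩; exact hS m
    · apply Real.iSup_le _ Metric.diam_nonneg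
      intro j
      apply Real.iSup_le _ Metric.diam_nonneg
      intro l
      apply Real.iSup_le _ Metric.diam_nonneg
      intro f
      have hf1 : ‖(f : StrongDual ℝ X)‖ ≤ 1 := by
        have := hK f.2
        simpa [Metric.mem_closedBall, dist_zero_right] using this
      calc |(f : StrongDual ℝ X) (x j - x l)|
          ≤ ‖(f : StrongDual ℝ X)‖ * ‖x j - x l‖ :=
            (f : StrongDual ℝ X).le_opNorm _
        _ ≤ 1 * ‖x j - x l‖ := by
            exact mul_le_mul_of_nonneg_right hf1 (norm_nonneg _)
        _ = dist (x j) (x l) := by rw [one_mul, dist_eq_norm]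
        _ ≤ Metric.diam (x '' Set.Ici n) :=
            Metric.dist_le_diam_of_mem (hbdd n) ⟨j, j.2, rfl⟩ ⟨l, l.2, rfl⟩
  · exact mul_nonneg hC.le hqd
end
end

section
/- The space K(ℓ₂) of compact operators on the Hilbert space ℓ₂ fails the Dunford–Pettis property; that is, there exist a Banach space Y and a weakly compact bounded linear operator T: K(ℓ₂) → Y which does not map every weakly null sequence to a norm null sequence. -/
open Filter Metric Topology Pointwise NormedSpace
open scoped ENNReal

set_option maxHeartbeats 1000000
set_option synthInstance.maxHeartbeats 400000

noncomputable section

/-- The Hilbert space `ℓ₂` (of real sequences). -/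
abbrev ellTwo : Type := lp (fun _ : ℕ => ℝ) 2

/-- The space `K(ℓ₂)` of compact operators on `ℓ₂`, with the operator norm. -/
abbrev KellTwo : Subspace ℝ (ellTwo →L[ℝ] ellTwo) := compactOperator (RingHom.id ℝ) ellTwo ellTwo

open scoped InnerProductSpace

def ee (n : ℕ) : ellTwo := lp.single 2 n 1

lemma norm_ee (n : ℕ) : ‖ee n‖ = 1 := by
  have := lp.norm_single (p := 2) (E := fun _ : ℕ => ℝ) (by norm_num) n (1:ℝ)
  simpa [ee] using this

lemma isCompactOperator_smulRight (g : ellTwo →L[ℝ] ℝ) (v : ellTwo) :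
    IsCompactOperator (g.smulRight v) := by
  refine ⟨(fun t : ℝ => t • v) '' closedBall 0 ‖g‖,
    (isCompact_closedBall _ _).image (continuous_id.smul continuous_const), ?_⟩
  refine mem_of_superset (closedBall_mem_nhds (0 : ellTwo) one_pos) ?_
  intro u hu
  refine ⟨g u, ?_, rfl⟩
  simpa [mem_closedBall, dist_zero_right] using
    (g.le_opNorm u).trans (by nlinarith [norm_nonneg g, mem_closedBall_zero_iff.mp hu])

def Xlin : ellTwo →ₗ[ℝ] KellTwo where
  toFun v := ⟨(innerSL ℝ (ee 0)).smulRight v, isCompactOperator_smulRight _ v⟩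
  map_add' v w := by
    apply Subtype.ext
    ext u
    simp [smul_add]
  map_smul' c v := by
    apply Subtype.ext
    ext u
    simp only [ContinuousLinearMap.smulRight_apply, SetLike.val_smul,
      ContinuousLinearMap.coe_smul', Pi.smul_apply]
    rw [smul_comm]
    simp

lemma norm_Xlin (v : ellTwo) : ‖Xlin v‖ ≤ 1 * ‖v‖ := by
  show ‖(innerSL ℝ (ee 0)).smulRight v‖ ≤ 1 * ‖v‖
  rw [ContinuousLinearMap.norm_smulRight_apply, innerSL_apply_norm, norm_ee]

def X : ellTwo →L[ℝ] KellTwo := Xlin.mkContinuous 1 norm_Xlin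

-- the homeomorphism WeakSpace ≃ₜ WeakDual for a Hilbert space
def hwk : WeakSpace ℝ ellTwo ≃ₜ WeakDual ℝ ellTwo where
  toFun v := InnerProductSpace.toDual ℝ ellTwo v
  invFun ψ := (InnerProductSpace.toDual ℝ ellTwo).symm ψ
  left_inv v := by exact (InnerProductSpace.toDual ℝ ellTwo).symm_apply_apply v
  right_inv ψ := by exact (InnerProductSpace.toDual ℝ ellTwo).apply_symm_apply ψ
  continuous_toFun := by
    apply WeakDual.continuous_of_continuous_eval
    intro y
    have : (fun v : WeakSpace ℝ ellTwo => (InnerProductSpace.toDual ℝ ellTwo v) y)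
        = fun v : WeakSpace ℝ ellTwo => (topDualPairing ℝ ellTwo).flip v (innerSL ℝ y) := by
      funext v
      show (InnerProductSpace.toDual ℝ ellTwo v) y = innerSL ℝ y v
      exact real_inner_comm (F := ellTwo) _ _
    exact (WeakBilin.eval_continuous _ _).congr (fun v => (congrFun this v).symm)
  continuous_invFun := by
    apply WeakBilin.continuous_of_continuous_eval
    intro φ
    have : (fun ψ : WeakDual ℝ ellTwo =>
        (topDualPairing ℝ ellTwo).flip ((InnerProductSpace.toDual ℝ ellTwo).symm ψ) φ)
        = fun ψ : WeakDual ℝ ellTwo =>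
          ψ ((InnerProductSpace.toDual ℝ ellTwo).symm φ) := by
      funext ψ
      show φ ((InnerProductSpace.toDual ℝ ellTwo).symm ψ) = ψ ((InnerProductSpace.toDual ℝ ellTwo).symm φ)
      conv_lhs => rw [← (InnerProductSpace.toDual ℝ ellTwo).apply_symm_apply φ]
      rw [InnerProductSpace.toDual_apply_apply, real_inner_comm]
      exact InnerProductSpace.toDual_symm_apply
    exact (WeakDual.eval_continuous _).congr (fun ψ => (congrFun this ψ).symm)

instance : T2Space (WeakSpace ℝ ellTwo) := hwk.isEmbedding.t2Space

lemma isCompact_weak_closedBall (r : ℝ) :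
    IsCompact (show Set (WeakSpace ℝ ellTwo) from (closedBall (0:ellTwo) r : Set ellTwo)) := by
  have hK : IsCompact (WeakDual.toStrongDual ⁻¹' closedBall (0 : StrongDual ℝ ellTwo) r) :=
    WeakDual.isCompact_closedBall (𝕜 := ℝ) (E := ellTwo) (0 : StrongDual ℝ ellTwo) r
  have himg : (show Set (WeakSpace ℝ ellTwo) from (closedBall (0:ellTwo) r : Set ellTwo))
      = hwk.symm '' (WeakDual.toStrongDual ⁻¹' closedBall (0 : StrongDual ℝ ellTwo) r) := by
    rw [Homeomorph.image_symm]
    ext v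
    show v ∈ closedBall (0 : ellTwo) r ↔ _
    have hnorm : ‖WeakDual.toStrongDual (hwk v)‖ = ‖(show ellTwo from v)‖ :=
      (InnerProductSpace.toDual ℝ ellTwo).norm_map _
    constructor
    · intro hv
      show WeakDual.toStrongDual (hwk v) ∈ closedBall 0 r
      rw [mem_closedBall_zero_iff, hnorm]
      exact mem_closedBall_zero_iff.mp hv
    · intro hv
      have h2 : ‖WeakDual.toStrongDual (hwk v)‖ ≤ r := mem_closedBall_zero_iff.mp hv
      rw [hnorm] at h2
      exact mem_closedBall_zero_iff.mpr h2
  rw [himg]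
  exact hK.image hwk.symm.continuous


/-- `K(ℓ₂)` fails the Dunford–Pettis property: it is not true that every weakly compact bounded
linear operator `T : K(ℓ₂) → Y` into a Banach space maps every weakly null sequence to a norm
null sequence. -/
theorem KellTwo_fails_dunfordPettis :
    ¬ ∀ (Y : Type) (_ : NormedAddCommGroup Y), ∀ (_ : NormedSpace ℝ Y) (_ : CompleteSpace Y),
        ∀ T : KellTwo →L[ℝ] Y,
          IsCompact (closure (show Set (WeakSpace ℝ Y) from ⇑T '' Metric.closedBall 0 1)) →
          ∀ x : ℕ → KellTwo,
            (∀ f : StrongDual ℝ KellTwo, Tendsto (fun n => f (x n)) atTop (𝓝 0)) →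
            Tendsto (fun n => ‖T (x n)‖) atTop (𝓝 0) := by
  intro h
  set T : KellTwo →L[ℝ] ellTwo :=
    ((ContinuousLinearMap.apply ℝ ellTwo) (ee 0)).comp (Submodule.subtypeL KellTwo) with hTdef
  set x : ℕ → KellTwo := fun n => X (ee n) with hxdef
  -- weak compactness of T
  have hwc : IsCompact (closure (show Set (WeakSpace ℝ ellTwo) from
      ⇑T '' Metric.closedBall 0 1)) := by
    have hc := isCompact_weak_closedBall 1
    have hsub : (⇑T '' Metric.closedBall 0 1 : Set ellTwo) ⊆ closedBall 0 1 := by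
      rintro - ⟨B, hB, rfl⟩
      rw [mem_closedBall_zero_iff]
      calc ‖T B‖ ≤ ‖(B : ellTwo →L[ℝ] ellTwo)‖ * ‖ee 0‖ := (B : ellTwo →L[ℝ] ellTwo).le_opNorm (ee 0)
        _ ≤ 1 := by rw [norm_ee, mul_one]; exact mem_closedBall_zero_iff.mp hB
    exact hc.of_isClosed_subset isClosed_closure (closure_minimal hsub hc.isClosed)
  -- x is weakly null
  have hwn : ∀ f : StrongDual ℝ KellTwo, Tendsto (fun n => f (x n)) atTop (𝓝 0) := by
    intro f
    set S : ellTwo →L[ℝ] ℝ := f.comp X with hSdef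
    set w : ellTwo := (InnerProductSpace.toDual ℝ ellTwo).symm S with hwdef
    have hfx : ∀ n, f (x n) = w n := by
      intro n
      have h1 : f (x n) = S (ee n) := rfl
      rw [h1, ← InnerProductSpace.toDual_symm_apply (𝕜 := ℝ) (y := S) (x := ee n)]
      rw [← hwdef]
      show ⟪w, lp.single 2 n (1:ℝ)⟫_ℝ = w n
      rw [lp.inner_single_right]
      simp
    have hsum : Summable (fun n => ‖w n‖ ^ (2:ℝ)) := by
      have := (lp.memℓp w).summable (p := 2) (by norm_num)
      simpa using this
    have htend : Tendsto (fun n => ‖w n‖ ^ (2:ℝ)) atTop (𝓝 0) := hsum.tendsto_atTop_zero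
    have hnt : Tendsto (fun n => ‖w n‖) atTop (𝓝 0) := by
      have hs : Tendsto (fun n => Real.sqrt (‖w n‖ ^ (2:ℝ))) atTop (𝓝 (Real.sqrt 0)) :=
        (Real.continuous_sqrt.tendsto _).comp htend
      have hsq : ∀ n, Real.sqrt (‖w n‖ ^ (2:ℝ)) = ‖w n‖ := by
        intro n
        rw [show (2:ℝ) = ((2:ℕ):ℝ) by norm_num, Real.rpow_natCast,
          Real.sqrt_sq (norm_nonneg _)]
      rw [Real.sqrt_zero] at hs
      have heq : (fun n => Real.sqrt (‖w n‖ ^ (2:ℝ))) = fun n => ‖w n‖ := funext hsq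
      rwa [heq] at hs
    have : Tendsto (fun n => w n) atTop (𝓝 0) := by
      have := tendsto_zero_iff_norm_tendsto_zero.mpr hnt
      exact this
    simpa [hfx] using this
  -- compute T (x n)
  have hT : ∀ n, T (x n) = ee n := by
    intro n
    show ((innerSL ℝ (ee 0)).smulRight (ee n)) (ee 0) = ee n
    rw [ContinuousLinearMap.smulRight_apply, innerSL_apply_apply,
      real_inner_self_eq_norm_sq, norm_ee]
    norm_num
  have hfinal := h ellTwo inferInstance inferInstance inferInstance T hwc x hwn
  have hconst : (fun n => ‖T (x n)‖) = fun _ => (1:ℝ) := by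
    funext n; rw [hT, norm_ee]
  rw [hconst] at hfinal
  have : (1:ℝ) = 0 := tendsto_nhds_unique tendsto_const_nhds hfinal
  norm_num at this
end
end

section
/- The dual space K(ℓ₂)* of the space of compact operators on ℓ₂ fails the Schur property; that is, there exists a weakly null sequence in K(ℓ₂)* which does not converge to 0 in norm. -/
open Filter Metric Topology Pointwise NormedSpace
open scoped ENNReal

set_option maxHeartbeats 1000000
set_option synthInstance.maxHeartbeats 400000

noncomputable section

section
def sdSNACG : SeminormedAddCommGroup (StrongDual ℝ KellTwo) :=
  @ContinuousLinearMap.toSeminormedAddCommGroup ℝ ℝ KellTwo ℝ _ _ _ _ _ _ (RingHom.id ℝ) _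
attribute [local instance] sdSNACG
def sdNS : NormedSpace ℝ (StrongDual ℝ KellTwo) :=
  @ContinuousLinearMap.toNormedSpace (𝕜 := ℝ) (𝕜₂ := ℝ) (E := KellTwo) (F := ℝ) _ _ _ _ _ _
    (σ₁₂ := RingHom.id ℝ) _ ℝ _ _ _
attribute [local instance] sdNS

/-- coordinate evaluation -/
def ev (n : ℕ) : ellTwo →L[ℝ] ℝ :=
  LinearMap.mkContinuous
    { toFun := fun x => x n
      map_add' := fun x y => by simp
      map_smul' := fun c x => by simp }
    1 (fun x => by rw [one_mul]; exact lp.norm_apply_le_norm (by norm_num) x n)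

example (x : ellTwo) (n : ℕ) : ev n x = x n := rfl

def δ (n : ℕ) : ellTwo := lp.single 2 n 1

/-- the map y ↦ (A ↦ (A y) 0) -/
def T : ellTwo →L[ℝ] StrongDual ℝ KellTwo :=
  LinearMap.mkContinuous
    { toFun := fun y => (ev 0).comp (((ContinuousLinearMap.apply ℝ ellTwo y)).comp KellTwo.subtypeL)
      map_add' := fun x y => by ext A; simp; rfl
      map_smul' := fun c x => by ext A; simp }
    1 (fun y => by
      apply ContinuousLinearMap.opNorm_le_bound _ (by positivity)
      intro A
      calc ‖((A : ellTwo →L[ℝ] ellTwo) y) 0‖ ≤ ‖(A : ellTwo →L[ℝ] ellTwo) y‖ :=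
            lp.norm_apply_le_norm (by norm_num) _ 0
        _ ≤ ‖A‖ * ‖y‖ := (A : ellTwo →L[ℝ] ellTwo).le_opNorm y
        _ = 1 * ‖y‖ * ‖A‖ := by ring)

example (y : ellTwo) (A : KellTwo) : T y A = ((A : ellTwo →L[ℝ] ellTwo) y) 0 := rfl

theorem weaknull (F : StrongDual ℝ (StrongDual ℝ KellTwo)) :
    Tendsto (fun n => F (T (δ n))) atTop (𝓝 0) := by
  set g : StrongDual ℝ ellTwo := F.comp T with hg
  have hFT : ∀ n, F (T (δ n)) = g (δ n) := fun n => rfl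
  set z : ellTwo := (InnerProductSpace.toDual ℝ ellTwo).symm g with hz
  have hgz : ∀ x, g x = inner (𝕜 := ℝ) z x := by
    intro x
    rw [hz]
    rw [← InnerProductSpace.toDual_apply_apply, LinearIsometryEquiv.apply_symm_apply]
  have hval : ∀ n, g (δ n) = z n := by
    intro n
    rw [hgz, δ, lp.inner_single_right]
    simp [RCLike.inner_apply]
  have hsum : Summable (fun n => ‖z n‖ ^ (2:ℝ≥0∞).toReal) :=
    (lp.memℓp z).summable (by norm_num)
  have h2 : Tendsto (fun n => ‖z n‖ ^ (2:ℝ≥0∞).toReal) atTop (𝓝 0) :=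
    hsum.tendsto_atTop_zero
  have h3 : Tendsto (fun n => ‖z n‖) atTop (𝓝 0) := by
    have h4 := (Real.continuous_sqrt.tendsto' 0 0 (by simp)).comp h2
    have heq : ∀ n, Real.sqrt (‖z n‖ ^ (2:ℝ≥0∞).toReal) = ‖z n‖ := by
      intro n
      rw [show (2:ℝ≥0∞).toReal = ((2:ℕ):ℝ) by norm_num, Real.rpow_natCast,
        Real.sqrt_sq (norm_nonneg _)]
    simpa [Function.comp_def, Real.sqrt_sq_eq_abs] using h4
  simp only [hFT, hval]
  exact tendsto_zero_iff_norm_tendsto_zero.2 h3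

/-- the rank-one operator `x ↦ (x n) • δ 0` -/
def Aop (n : ℕ) : ellTwo →L[ℝ] ellTwo := (ev n).smulRight (δ 0)

theorem Aop_compact (n : ℕ) : IsCompactOperator (Aop n) := by
  apply (isCompactOperator_iff_image_ball_subset_compact (𝕜₁ := ℝ) (𝕜₂ := ℝ)
    ((Aop n) : ellTwo →ₗ[ℝ] ellTwo) (r := 1) one_pos).mpr
  refine ⟨(fun t : ℝ => t • δ 0) '' Set.Icc (-1) 1, ?_, ?_⟩
  · exact (isCompact_Icc.image (by fun_prop))
  · rintro _ ⟨x, hx, rfl⟩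
    refine ⟨x n, ?_, rfl⟩
    simp only [Set.mem_Icc]
    constructor <;> [skip; skip] <;>
    · have h1 : ‖x n‖ ≤ ‖x‖ := lp.norm_apply_le_norm (by norm_num) x n
      have h2 : ‖x‖ < 1 := by simpa using mem_ball_zero_iff.mp hx
      have := h1.trans h2.le
      rw [Real.norm_eq_abs, abs_le] at this
      first | exact this.1 | exact this.2

theorem Aop_mem (n : ℕ) : Aop n ∈ KellTwo := Aop_compact n

theorem Aop_norm_le (n : ℕ) : ‖Aop n‖ ≤ 1 := by
  have h0 : ‖δ 0‖ = 1 := by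
    have := lp.norm_single (p := 2) (E := fun _ : ℕ => ℝ) (by norm_num) 0 (1:ℝ)
    simpa [δ] using this
  have : ‖Aop n‖ ≤ ‖ev n‖ * ‖δ 0‖ := ContinuousLinearMap.norm_smulRight_apply .. |>.le
  have hev : ‖ev n‖ ≤ 1 := LinearMap.mkContinuous_norm_le _ zero_le_one _
  calc ‖Aop n‖ ≤ ‖ev n‖ * ‖δ 0‖ := this
    _ ≤ 1 * 1 := by apply mul_le_mul hev (le_of_eq h0) (norm_nonneg _) zero_le_one
    _ = 1 := by ring

theorem T_apply_Aop (n : ℕ) : T (δ n) ⟨Aop n, Aop_mem n⟩ = 1 := by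
  show ((Aop n) (δ n)) 0 = 1
  have : (Aop n) (δ n) = ((δ n) n : ℝ) • δ 0 := rfl
  rw [this, δ, lp.single_apply_self]
  simp [δ, lp.single_apply_self]

theorem norm_ge (n : ℕ) : 1 ≤ ‖T (δ n)‖ := by
  have h1 : ‖T (δ n) ⟨Aop n, Aop_mem n⟩‖ ≤ ‖T (δ n)‖ * ‖(⟨Aop n, Aop_mem n⟩ : KellTwo)‖ :=
    ContinuousLinearMap.le_opNorm (𝕜 := ℝ) (𝕜₂ := ℝ) (E := KellTwo) (F := ℝ) (σ₁₂ := RingHom.id ℝ) (T (δ n)) _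
  have h2 : ‖(⟨Aop n, Aop_mem n⟩ : KellTwo)‖ = ‖Aop n‖ := rfl
  rw [T_apply_Aop, h2] at h1
  simp only [norm_one] at h1
  by_contra hlt
  push_neg at hlt
  nlinarith [Aop_norm_le n, norm_nonneg (Aop n), norm_nonneg (T (δ n))]

end

/-- The dual `K(ℓ₂)*` fails the Schur property: there is a weakly null sequence in `K(ℓ₂)*`
(i.e. null for the weak topology `σ(K(ℓ₂)*, K(ℓ₂)**)`) which is not norm null. -/
theorem dual_KellTwo_fails_schur :
    ∃ φ : ℕ → StrongDual ℝ KellTwo,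
      (∀ F : StrongDual ℝ (StrongDual ℝ KellTwo),
        Tendsto (fun n => F (φ n)) atTop (𝓝 0)) ∧
      ¬ Tendsto (fun n => @norm _ ContinuousLinearMap.hasOpNorm (φ n)) atTop (𝓝 0) := by

  refine ⟨fun n => T (δ n), weaknull, fun h => ?_⟩
  obtain ⟨n, hn⟩ := (h.eventually (gt_mem_nhds (by norm_num : (0:ℝ) < 1))).exists
  exact absurd (norm_ge n) (not_le.mpr hn)
end
end
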